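/- arXiv:hep-th/0604116 — 3 statements merged into one kernel-verified Lean document; each statement's English description precedes it below -/
import Mathlib

section
/- Let R be a Rota–Baxter operator of nonzero weight θ on an associative K-algebra A (char K = 0). Then for all a₁, …, aₙ ∈ A, a₁ *_R a₂ *_R ⋯ *_R aₙ = (1/θ)(∏ᵢ R(aᵢ) - (-1)ⁿ ∏ᵢ R̃(aᵢ)), where *_R is the double product and R̃ = θ·id - R (products taken in order). -/
/-- The double Rota–Baxter product `x *_R y := x R(y) + R(x) y - θ x y`. -/
def dprod {K A : Type*} [Field K] [Ring A] [Algebra K A]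
    (θ : K) (R : A →ₗ[K] A) (x y : A) : A :=
  x * R y + R x * y - θ • (x * y)

/-- The nested (right-associated) product `a *_R b₁ *_R ⋯ *_R bₙ`. -/
def nestD {A : Type*} (f : A → A → A) : A → List A → A
  | a, [] => a
  | a, b :: l => f a (nestD f b l)

lemma rb_aux {K A : Type*} [Field K] [Ring A] [Algebra K A]
    (θ : K) (R : A →ₗ[K] A)
    (hRB : ∀ x y : A, R x * R y = R (R x * y + x * R y - θ • (x * y))) :
    ∀ (l : List A) (a : A),
      R (nestD (dprod θ R) a l) = R a * (l.map R).prod ∧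
      θ • (nestD (dprod θ R) a l) - R (nestD (dprod θ R) a l)
        = (-1 : K) ^ l.length •
            ((θ • a - R a) * (l.map (fun x => θ • x - R x)).prod)
  | [], a => by simp [nestD]
  | b :: t, a => by
    obtain ⟨h1, h2⟩ := rb_aux θ R hRB t b
    set q := nestD (dprod θ R) b t with hq
    have hnest : nestD (dprod θ R) a (b :: t) = dprod θ R a q := rfl
    have hR : R (dprod θ R a q) = R a * R q := by
      rw [hRB a q]; congr 1; unfold dprod; abel
    have key : θ • (dprod θ R a q) - R a * R q
        = -((θ • a - R a) * (θ • q - R q)) := by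
      simp only [dprod, smul_sub, smul_add, sub_mul, mul_sub, smul_mul_assoc,
        mul_smul_comm, smul_smul]
      abel
    constructor
    · rw [hnest, hR, h1, List.map_cons, List.prod_cons]
    · rw [hnest, hR, key, h2, List.map_cons, List.prod_cons, List.length_cons,
        mul_smul_comm, pow_succ, mul_comm ((-1 : K) ^ t.length) (-1), mul_smul,
        neg_one_smul]

/-- `a₁ *_R ⋯ *_R aₙ = θ⁻¹ (∏ R(aᵢ) - (-1)ⁿ ∏ R̃(aᵢ))` for a Rota–Baxter
operator `R` of nonzero weight `θ`, `R̃ = θ·id - R`. -/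
theorem stmt_5 {K A : Type*} [Field K] [CharZero K] [Ring A] [Algebra K A]
    (θ : K) (hθ : θ ≠ 0) (R : A →ₗ[K] A)
    (hRB : ∀ x y : A, R x * R y = R (R x * y + x * R y - θ • (x * y)))
    (n : ℕ) (a : Fin (n + 1) → A) :
    nestD (dprod θ R) (a 0) (List.ofFn fun i : Fin n => a i.succ)
      = θ⁻¹ • ((List.ofFn fun i : Fin (n + 1) => R (a i)).prod
          - (-1 : K) ^ (n + 1) • (List.ofFn fun i : Fin (n + 1) => θ • a i - R (a i)).prod) := by
  obtain ⟨h1, h2⟩ := rb_aux θ R hRB (List.ofFn fun i : Fin n => a i.succ) (a 0)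
  have hlen : (List.ofFn fun i : Fin n => a i.succ).length = n := by simp
  have hθnest : θ • nestD (dprod θ R) (a 0) (List.ofFn fun i : Fin n => a i.succ)
      = (List.ofFn fun i : Fin (n + 1) => R (a i)).prod
        - (-1 : K) ^ (n + 1) •
            (List.ofFn fun i : Fin (n + 1) => θ • a i - R (a i)).prod := by
    have e1 : (List.ofFn fun i : Fin (n + 1) => R (a i)).prod
        = R (a 0) * ((List.ofFn fun i : Fin n => a i.succ).map R).prod := by
      rw [List.ofFn_succ, List.prod_cons, List.map_ofFn]; rfl
    have e2 : (List.ofFn fun i : Fin (n + 1) => θ • a i - R (a i)).prod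
        = (θ • a 0 - R (a 0)) *
            ((List.ofFn fun i : Fin n => a i.succ).map (fun x => θ • x - R x)).prod := by
      rw [List.ofFn_succ, List.prod_cons, List.map_ofFn]; rfl
    have : θ • nestD (dprod θ R) (a 0) (List.ofFn fun i : Fin n => a i.succ)
        = R (nestD (dprod θ R) (a 0) (List.ofFn fun i : Fin n => a i.succ))
          + (θ • nestD (dprod θ R) (a 0) (List.ofFn fun i : Fin n => a i.succ)
              - R (nestD (dprod θ R) (a 0) (List.ofFn fun i : Fin n => a i.succ))) := by
      abel
    rw [this, h2, h1, hlen, e1, e2, pow_succ, mul_comm ((-1:K)^n) (-1), mul_smul,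
      neg_one_smul, sub_neg_eq_add]
  rw [← hθnest, inv_smul_smul₀ hθ]
end

section
/- (Atkinson's theorem) Let (𝒜, R) be a complete filtered associative unital Rota–Baxter algebra of weight θ with filtration-preserving R, and let a ∈ 𝒜₁ (the first filtration level). If X, Y ∈ 𝒜 satisfy the recursions X = 1 - R(X·a) and Y = 1 - R̃(a·Y), where R̃ = θ·id - R, then X·(1 + θa)·Y = 1; consequently 1 + θa = X⁻¹·Y⁻¹. -/
/-- Atkinson's theorem: in a filtered unital Rota–Baxter algebra `(𝒜, R)` of
weight `θ`, if `X = 1 - R(X a)` and `Y = 1 - R̃(a Y)` with `R̃ = θ·id - R`, then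
`X (1 + θ a) Y = 1`; consequently `1 + θ a = X⁻¹ Y⁻¹`. -/
theorem stmt_12 {K A : Type*} [CommRing K] [Ring A] [Algebra K A]
    (θ : K)
    (F : ℕ → Submodule K A)
    (hdec : ∀ n, F (n + 1) ≤ F n)
    (hmulF : ∀ n m, ∀ x ∈ F n, ∀ y ∈ F m, x * y ∈ F (n + m))
    (R : A →ₗ[K] A)
    (hRB : ∀ x y : A, R x * R y = R (R x * y + x * R y - θ • (x * y)))
    (hfil : ∀ n, ∀ x ∈ F n, R x ∈ F n)
    (a : A) (ha : a ∈ F 1)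
    (X Y : A)
    (hX : X = 1 - R (X * a))
    (hY : Y = 1 - (θ • (a * Y) - R (a * Y))) :
    X * (1 + θ • a) * Y = 1
    ∧ ∀ X' Y' : A, X * X' = 1 → X' * X = 1 → Y * Y' = 1 → Y' * Y = 1 →
        1 + θ • a = X' * Y' := by
  have h1 : R (X * a) = 1 - X := by conv_rhs => rw [hX]; rw [sub_sub_cancel]
  have h2 : R (a * Y) = Y - 1 + θ • (a * Y) := by
    set v := a * Y with hv
    have : Y + (θ • v - R v) = 1 := by rw [hY]; abel
    have : R v = Y + θ • v - 1 := by
      rw [eq_sub_iff_add_eq, ← this]; abel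
    rw [this]; abel
  have key := hRB (X * a) (a * Y)
  rw [h1, h2] at key
  have hin : (1 - X) * (a * Y) + X * a * (Y - 1 + θ • (a * Y)) - θ • (X * a * (a * Y))
      = a * Y - X * a := by
    simp only [sub_mul, mul_sub, mul_add, one_mul, mul_one, mul_smul_comm, mul_assoc]
    abel
  rw [hin, map_sub, h1, h2] at key
  -- key : (1 - X) * (Y - 1 + θ • (a * Y)) = Y - 1 + θ • (a * Y) - (1 - X)
  have expand : (1 - X) * (Y - 1 + θ • (a * Y))
      = (Y - 1 + θ • (a * Y)) - (X * Y - X + θ • (X * (a * Y))) := by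
    simp only [sub_mul, mul_sub, mul_add, one_mul, mul_one, mul_smul_comm, smul_add,
      smul_sub]
    abel
  rw [expand, sub_right_inj] at key
  -- key : X * Y - X + θ • (X * (a * Y)) = 1 - X
  have main : X * Y + θ • (X * (a * Y)) = 1 := by
    calc X * Y + θ • (X * (a * Y)) = (X * Y - X + θ • (X * (a * Y))) + X := by abel
      _ = (1 - X) + X := by rw [key]
      _ = 1 := by abel
  have expand2 : X * (1 + θ • a) * Y = X * Y + θ • (X * (a * Y)) := by
    simp only [mul_add, add_mul, mul_one, one_mul, smul_mul_assoc, mul_smul_comm,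
      mul_assoc]
  have hmain : X * (1 + θ • a) * Y = 1 := expand2.trans main
  refine ⟨hmain, fun X' Y' hXX' hX'X hYY' hY'Y => ?_⟩
  have h3 : X' * (X * (1 + θ • a) * Y) * Y' = 1 + θ • a := by
    simp only [← mul_assoc]
    rw [hX'X, one_mul, mul_assoc, hYY', mul_one]
  rw [← h3, hmain, mul_one]
end

section
/- Let (𝒜, R) be a complete filtered associative unital Rota–Baxter algebra of weight 0 (so R(x)R(y) = R(R(x)y + xR(y))) with filtration-preserving R. If X = 1 - R(X·a) and Y = 1 + R(a·Y) for a ∈ 𝒜₁, then X·Y = 1. -/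
/-- Atkinson's factorization in weight zero: if `R` is a weight-zero Rota–Baxter
operator on a filtered algebra and `X = 1 - R(X a)`, `Y = 1 + R(a Y)`, then `X Y = 1`. -/
theorem stmt_13 {K A : Type*} [CommRing K] [Ring A] [Algebra K A]
    (F : ℕ → Submodule K A)
    (hdec : ∀ n, F (n + 1) ≤ F n)
    (hmulF : ∀ n m, ∀ x ∈ F n, ∀ y ∈ F m, x * y ∈ F (n + m))
    (R : A →ₗ[K] A)
    (hRB : ∀ x y : A, R x * R y = R (R x * y + x * R y))
    (hfil : ∀ n, ∀ x ∈ F n, R x ∈ F n)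
    (a : A) (ha : a ∈ F 1)
    (X Y : A)
    (hX : X = 1 - R (X * a))
    (hY : Y = 1 + R (a * Y)) :
    X * Y = 1 := by
  have hu : R (X * a) = 1 - X := by
    nth_rewrite 2 [hX]
    rw [sub_sub_cancel]
  have hv : R (a * Y) = Y - 1 := by
    nth_rewrite 2 [hY]
    rw [add_sub_cancel_left]
  have key : R (X * a) * R (a * Y) = R (a * Y) - R (X * a) := by
    rw [hRB]
    have harg : R (X * a) * (a * Y) + X * a * R (a * Y) = a * Y - X * a := by
      rw [hu, hv]; noncomm_ring
    rw [harg, map_sub, hu, hv]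
  nth_rewrite 1 [hX]
  rw [hY]
  have expand : (1 - R (X * a)) * (1 + R (a * Y))
      = 1 + R (a * Y) - R (X * a) - R (X * a) * R (a * Y) := by noncomm_ring
  rw [expand, key]
  abel
end
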